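/- Fix ρ ∈ (−1,1) and let x, y ∈ ℝ satisfy x − ρy > 0 and y − ρx > 0. Then the joint upper-tail probability of the standard bivariate normal satisfies the Savage-type bounds: P(X > x, Y > y) ≤ φ₂(x,y;ρ)·(1−ρ²)²/((x−ρy)(y−ρx)), and P(X > x, Y > y) ≥ φ₂(x,y;ρ)·(1−ρ²)²/((x−ρy)(y−ρx))·[1 − (1−ρ²)·(1/(x−ρy)² − ρ/((x−ρy)(y−ρx)) + 1/(y−ρx)²)]. -/

import Mathlib

open MeasureTheory

/-- Standard bivariate normal density with correlation `ρ`. -/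
noncomputable def biNormalPdf (ρ x y : ℝ) : ℝ :=
  (2 * Real.pi * Real.sqrt (1 - ρ ^ 2))⁻¹ *
    Real.exp (-(x ^ 2 - 2 * ρ * x * y + y ^ 2) / (2 * (1 - ρ ^ 2)))

/-- Joint upper-tail probability of the standard bivariate normal. -/
noncomputable def biNormalTail (ρ x y : ℝ) : ℝ :=
  ∫ u in Set.Ioi x, ∫ v in Set.Ioi y, biNormalPdf ρ u v

section SavageAux
open Set Real Filter

lemma mypow_exp_integrable (n : ℕ) {c : ℝ} (hc : 0 < c) :
    IntegrableOn (fun t : ℝ => t ^ n * Real.exp (-(c * t))) (Set.Ioi 0) := by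
  refine integrable_of_isBigO_exp_neg (half_pos hc)
    (((continuous_pow n).mul ((continuous_const.mul continuous_id).neg.rexp)).continuousOn) ?_
  have h := (Real.tendsto_pow_mul_exp_neg_atTop_nhds_zero n).comp
    (Filter.tendsto_id.const_mul_atTop (half_pos hc))
  have h2 : Filter.Tendsto
      (fun t : ℝ => t ^ n * Real.exp (-(c * t)) / Real.exp (-(c/2) * t))
      Filter.atTop (nhds 0) := by
    have h3 := h.const_mul ((2/c)^n)
    rw [mul_zero] at h3
    refine h3.congr fun t => ?_
    show (2/c)^n * ((c/2 * t) ^ n * Real.exp (-(c/2 * t))) = _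
    have e1 : Real.exp (-(c*t)) / Real.exp (-(c/2) * t) = Real.exp (-(c/2*t)) := by
      rw [← Real.exp_sub]; ring_nf
    rw [mul_div_assoc, e1, ← mul_assoc, ← mul_pow]
    have : 2 / c * (c / 2 * t) = t := by field_simp
    rw [this]
  exact (Asymptotics.isLittleO_of_tendsto (fun x hx => absurd hx (Real.exp_ne_zero _).elim) h2).isBigO

lemma mypow_exp_integral (n : ℕ) {c : ℝ} (hc : 0 < c) :
    ∫ t in Set.Ioi 0, t ^ n * Real.exp (-(c * t)) = (Nat.factorial n : ℝ) / c ^ (n + 1) := by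
  have h := Real.integral_rpow_mul_exp_neg_mul_Ioi (a := (n : ℝ) + 1) (by positivity) hc
  rw [show ((n : ℝ) + 1) - 1 = (n : ℝ) by ring] at h
  rw [show (∫ t in Set.Ioi 0, t ^ n * Real.exp (-(c * t)))
      = ∫ t in Set.Ioi 0, t ^ (n : ℝ) * Real.exp (-(c * t)) from
    setIntegral_congr_fun measurableSet_Ioi fun t ht => by
      rw [Real.rpow_natCast], h, Real.Gamma_nat_eq_factorial,
    show ((n : ℝ) + 1) = ((n + 1 : ℕ) : ℝ) by push_cast; ring, Real.rpow_natCast,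
    div_pow, one_pow]
  field_simp

lemma quad_exp_integrable {c : ℝ} (hc : 0 < c) (p q r : ℝ) :
    IntegrableOn (fun t : ℝ => (p + q * t + r * t ^ 2) * Real.exp (-(c * t))) (Set.Ioi 0) := by
  have h0 := (mypow_exp_integrable 0 hc).const_mul p
  have h1 := (mypow_exp_integrable 1 hc).const_mul q
  have h2 := (mypow_exp_integrable 2 hc).const_mul r
  refine ((h0.add h1).add h2).congr (Filter.Eventually.of_forall fun t => ?_)
  simp only [Pi.add_apply, pow_zero, pow_one]
  ring

lemma quad_exp_integral {c : ℝ} (hc : 0 < c) (p q r : ℝ) :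
    ∫ t in Set.Ioi 0, (p + q * t + r * t ^ 2) * Real.exp (-(c * t))
      = p / c + q / c ^ 2 + 2 * r / c ^ 3 := by
  have h0 := (mypow_exp_integrable 0 hc).const_mul p
  have h1 : Integrable (fun t : ℝ => q * (t ^ 1 * Real.exp (-(c * t))))
      (volume.restrict (Set.Ioi 0)) := (mypow_exp_integrable 1 hc).const_mul q
  have h2 : Integrable (fun t : ℝ => r * (t ^ 2 * Real.exp (-(c * t))))
      (volume.restrict (Set.Ioi 0)) := (mypow_exp_integrable 2 hc).const_mul r
  have h01 : Integrable (fun t : ℝ => p * (t ^ 0 * Real.exp (-(c * t)))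
      + q * (t ^ 1 * Real.exp (-(c * t)))) (volume.restrict (Set.Ioi 0)) := h0.add h1
  have e : ∀ t : ℝ, (p + q * t + r * t ^ 2) * Real.exp (-(c * t))
      = p * (t ^ 0 * Real.exp (-(c * t))) + q * (t ^ 1 * Real.exp (-(c * t)))
        + r * (t ^ 2 * Real.exp (-(c * t))) := by intro t; simp only [pow_zero, pow_one]; ring
  rw [setIntegral_congr_fun measurableSet_Ioi (fun t _ => e t), integral_add h01 h2,
    integral_add h0 h1, integral_const_mul, integral_const_mul, integral_const_mul,
    mypow_exp_integral 0 hc, mypow_exp_integral 1 hc, mypow_exp_integral 2 hc]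
  simp [Nat.factorial]
  ring

lemma shift_Ioi (g : ℝ → ℝ) (c : ℝ) :
    ∫ v in Set.Ioi c, g v = ∫ t in Set.Ioi 0, g (c + t) := by
  rw [← integral_indicator measurableSet_Ioi, ← integral_indicator measurableSet_Ioi,
    ← integral_add_left_eq_self (fun v => Set.indicator (Set.Ioi c) g v) c]
  congr 1; funext t
  by_cases h : 0 < t
  · rw [Set.indicator_of_mem (by simp [h] : c + t ∈ Set.Ioi c),
      Set.indicator_of_mem (by exact h : t ∈ Set.Ioi 0)]
  · rw [Set.indicator_of_notMem (by simpa using h),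
      Set.indicator_of_notMem (by simpa using h)]

set_option maxHeartbeats 1000000 in
lemma Ibounds {ρ a b : ℝ} (h1 : -1 < ρ) (h2 : ρ < 1) (ha : 0 < a) (hb : 0 < b) :
    (1 - ρ ^ 2) ^ 2 / (a * b) * (1 - (1 - ρ ^ 2) * (1 / a ^ 2 - ρ / (a * b) + 1 / b ^ 2))
      ≤ (∫ s in Set.Ioi 0, ∫ t in Set.Ioi 0,
          Real.exp (-((a * s + b * t) / (1 - ρ ^ 2))
            - (s ^ 2 - 2 * ρ * s * t + t ^ 2) / (2 * (1 - ρ ^ 2))))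
    ∧ (∫ s in Set.Ioi 0, ∫ t in Set.Ioi 0,
          Real.exp (-((a * s + b * t) / (1 - ρ ^ 2))
            - (s ^ 2 - 2 * ρ * s * t + t ^ 2) / (2 * (1 - ρ ^ 2))))
      ≤ (1 - ρ ^ 2) ^ 2 / (a * b) := by
  have hσ : 0 < 1 - ρ ^ 2 := by nlinarith
  set σ2 : ℝ := 1 - ρ ^ 2 with hσ2
  set α : ℝ := a / σ2 with hα2
  set c : ℝ := b / σ2 with hc2
  have hα : 0 < α := div_pos ha hσ
  have hc : 0 < c := div_pos hb hσ
  set K : ℝ → ℝ → ℝ := fun s t => Real.exp (-((a * s + b * t) / σ2)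
      - (s ^ 2 - 2 * ρ * s * t + t ^ 2) / (2 * σ2)) with hK
  have hσ' : σ2 ≠ 0 := ne_of_gt hσ
  -- factorization
  have hfac : ∀ s t : ℝ, K s t
      = Real.exp (-(α * s)) * Real.exp (-(c * t))
        * Real.exp (-((s ^ 2 - 2 * ρ * s * t + t ^ 2) / (2 * σ2))) := by
    intro s t
    have e : -((a * s + b * t) / σ2) - (s ^ 2 - 2 * ρ * s * t + t ^ 2) / (2 * σ2)
        = (-(α * s) + -(c * t)) + -((s ^ 2 - 2 * ρ * s * t + t ^ 2) / (2 * σ2)) := by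
      rw [hα2, hc2]; field_simp; ring
    simp only [hK]
    rw [e, Real.exp_add, Real.exp_add]
  have hq : ∀ s t : ℝ, 0 ≤ s ^ 2 - 2 * ρ * s * t + t ^ 2 := by
    intro s t; nlinarith [sq_nonneg (s - t), sq_nonneg (s + t)]
  have hKpos : ∀ s t : ℝ, 0 < K s t := fun s t => Real.exp_pos _
  -- pointwise upper bound
  have hup : ∀ s t : ℝ, K s t ≤ (Real.exp (-(α * s)) + 0 * t + 0 * t ^ 2) * Real.exp (-(c * t)) := by
    intro s t
    rw [hfac]
    have h3 : Real.exp (-((s ^ 2 - 2 * ρ * s * t + t ^ 2) / (2 * σ2))) ≤ 1 := by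
      rw [Real.exp_le_one_iff]
      have h4 := hq s t
      have h5 : 0 ≤ (s ^ 2 - 2 * ρ * s * t + t ^ 2) / (2 * σ2) := by positivity
      linarith
    calc Real.exp (-(α * s)) * Real.exp (-(c * t))
          * Real.exp (-((s ^ 2 - 2 * ρ * s * t + t ^ 2) / (2 * σ2)))
        ≤ Real.exp (-(α * s)) * Real.exp (-(c * t)) * 1 := by
          exact mul_le_mul_of_nonneg_left h3 (by positivity)
      _ = (Real.exp (-(α * s)) + 0 * t + 0 * t ^ 2) * Real.exp (-(c * t)) := by ring
  -- continuity of K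
  have hKcont : Continuous (fun p : ℝ × ℝ => K p.1 p.2) := by
    simp only [hK]
    fun_prop
  -- integrability of K s · on Ioi 0
  have hKt : ∀ s : ℝ, IntegrableOn (fun t => K s t) (Set.Ioi 0) := by
    intro s
    refine Integrable.mono (quad_exp_integrable hc (Real.exp (-(α * s))) 0 0)
      ((hKcont.comp (by fun_prop : Continuous fun t : ℝ => (s, t))).aestronglyMeasurable) ?_
    refine Filter.Eventually.of_forall fun t => ?_
    rw [Real.norm_eq_abs, Real.norm_eq_abs, abs_of_nonneg (hKpos s t).le,
      abs_of_nonneg (by nlinarith [Real.exp_pos (-(α * s)), Real.exp_pos (-(c * t))])]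
    exact hup s t
  -- inner upper bound
  have hinner_up : ∀ s : ℝ, (∫ t in Set.Ioi 0, K s t)
      ≤ (1 / c + 0 * s + 0 * s ^ 2) * Real.exp (-(α * s)) := by
    intro s
    calc (∫ t in Set.Ioi 0, K s t)
        ≤ ∫ t in Set.Ioi 0, (Real.exp (-(α * s)) + 0 * t + 0 * t ^ 2) * Real.exp (-(c * t)) :=
          integral_mono (hKt s) (quad_exp_integrable hc _ 0 0) (hup s)
      _ = Real.exp (-(α * s)) / c + 0 / c ^ 2 + 2 * 0 / c ^ 3 := quad_exp_integral hc _ 0 0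
      _ = (1 / c + 0 * s + 0 * s ^ 2) * Real.exp (-(α * s)) := by ring
  have hinner_nonneg : ∀ s : ℝ, 0 ≤ ∫ t in Set.Ioi 0, K s t := fun s =>
    integral_nonneg fun t => (hKpos s t).le
  -- upper bound
  have hupper : (∫ s in Set.Ioi 0, ∫ t in Set.Ioi 0, K s t) ≤ σ2 ^ 2 / (a * b) := by
    calc (∫ s in Set.Ioi 0, ∫ t in Set.Ioi 0, K s t)
        ≤ ∫ s in Set.Ioi 0, (1 / c + 0 * s + 0 * s ^ 2) * Real.exp (-(α * s)) := by
          refine integral_mono_of_nonneg (Filter.Eventually.of_forall hinner_nonneg)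
            (quad_exp_integrable hα _ 0 0) (Filter.Eventually.of_forall hinner_up)
      _ = (1 / c) / α + 0 / α ^ 2 + 2 * 0 / α ^ 3 := quad_exp_integral hα _ 0 0
      _ = σ2 ^ 2 / (a * b) := by rw [hα2, hc2]; field_simp; ring
  -- pointwise lower bound
  have hlow : ∀ s t : ℝ,
      (Real.exp (-(α * s)) * (1 - s ^ 2 / (2 * σ2))
        + Real.exp (-(α * s)) * (ρ * s / σ2) * t
        + Real.exp (-(α * s)) * (-1 / (2 * σ2)) * t ^ 2) * Real.exp (-(c * t)) ≤ K s t := by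
    intro s t
    rw [hfac]
    have hw : 1 - (s ^ 2 - 2 * ρ * s * t + t ^ 2) / (2 * σ2)
        ≤ Real.exp (-((s ^ 2 - 2 * ρ * s * t + t ^ 2) / (2 * σ2))) := by
      have := Real.add_one_le_exp (-((s ^ 2 - 2 * ρ * s * t + t ^ 2) / (2 * σ2)))
      linarith
    calc (Real.exp (-(α * s)) * (1 - s ^ 2 / (2 * σ2))
          + Real.exp (-(α * s)) * (ρ * s / σ2) * t
          + Real.exp (-(α * s)) * (-1 / (2 * σ2)) * t ^ 2) * Real.exp (-(c * t))
        = Real.exp (-(α * s)) * Real.exp (-(c * t))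
            * (1 - (s ^ 2 - 2 * ρ * s * t + t ^ 2) / (2 * σ2)) := by field_simp; ring
      _ ≤ Real.exp (-(α * s)) * Real.exp (-(c * t))
            * Real.exp (-((s ^ 2 - 2 * ρ * s * t + t ^ 2) / (2 * σ2))) :=
          mul_le_mul_of_nonneg_left hw (by positivity)
  -- inner lower bound
  have hinner_low : ∀ s : ℝ,
      (1 / c - 1 / (σ2 * c ^ 3) + ρ / (σ2 * c ^ 2) * s + (-1 / (2 * σ2 * c)) * s ^ 2)
          * Real.exp (-(α * s))
        ≤ ∫ t in Set.Ioi 0, K s t := by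
    intro s
    have hv := quad_exp_integral hc (Real.exp (-(α * s)) * (1 - s ^ 2 / (2 * σ2)))
      (Real.exp (-(α * s)) * (ρ * s / σ2)) (Real.exp (-(α * s)) * (-1 / (2 * σ2)))
    calc (1 / c - 1 / (σ2 * c ^ 3) + ρ / (σ2 * c ^ 2) * s + (-1 / (2 * σ2 * c)) * s ^ 2)
            * Real.exp (-(α * s))
        = Real.exp (-(α * s)) * (1 - s ^ 2 / (2 * σ2)) / c
            + Real.exp (-(α * s)) * (ρ * s / σ2) / c ^ 2
            + 2 * (Real.exp (-(α * s)) * (-1 / (2 * σ2))) / c ^ 3 := by field_simp; ring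
      _ = ∫ t in Set.Ioi 0, (Real.exp (-(α * s)) * (1 - s ^ 2 / (2 * σ2))
            + Real.exp (-(α * s)) * (ρ * s / σ2) * t
            + Real.exp (-(α * s)) * (-1 / (2 * σ2)) * t ^ 2) * Real.exp (-(c * t)) := hv.symm
      _ ≤ ∫ t in Set.Ioi 0, K s t :=
          integral_mono (quad_exp_integrable hc _ _ _) (hKt s) (hlow s)
  -- integrability of inner integral
  have hinnerK_meas : StronglyMeasurable (fun s => ∫ t in Set.Ioi 0, K s t) :=
    hKcont.stronglyMeasurable.integral_prod_right'
  have hinnerK_int : IntegrableOn (fun s => ∫ t in Set.Ioi 0, K s t) (Set.Ioi 0) := by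
    refine Integrable.mono (quad_exp_integrable hα (1 / c) 0 0)
      hinnerK_meas.aestronglyMeasurable ?_
    refine Filter.Eventually.of_forall fun s => ?_
    rw [Real.norm_eq_abs, Real.norm_eq_abs, abs_of_nonneg (hinner_nonneg s),
      abs_of_nonneg (by nlinarith [Real.exp_pos (-(α * s)), one_div_pos.mpr hc])]
    exact hinner_up s
  -- lower bound
  have hlower : σ2 ^ 2 / (a * b) * (1 - σ2 * (1 / a ^ 2 - ρ / (a * b) + 1 / b ^ 2))
      ≤ ∫ s in Set.Ioi 0, ∫ t in Set.Ioi 0, K s t := by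
    calc σ2 ^ 2 / (a * b) * (1 - σ2 * (1 / a ^ 2 - ρ / (a * b) + 1 / b ^ 2))
        = (1 / c - 1 / (σ2 * c ^ 3)) / α + ρ / (σ2 * c ^ 2) / α ^ 2
            + 2 * (-1 / (2 * σ2 * c)) / α ^ 3 := by rw [hα2, hc2]; field_simp; ring
      _ = ∫ s in Set.Ioi 0, (1 / c - 1 / (σ2 * c ^ 3) + ρ / (σ2 * c ^ 2) * s
            + (-1 / (2 * σ2 * c)) * s ^ 2) * Real.exp (-(α * s)) :=
          (quad_exp_integral hα _ _ _).symm
      _ ≤ ∫ s in Set.Ioi 0, ∫ t in Set.Ioi 0, K s t :=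
          integral_mono (quad_exp_integrable hα _ _ _) hinnerK_int hinner_low
  exact ⟨hlower, hupper⟩

end SavageAux

/-- Savage-type bounds for the joint upper tail of the bivariate normal
(one- and two-term truncations of Ruben's expansion of the bivariate Mills ratio). -/
theorem stmt_18 (ρ : ℝ) (hρ : ρ ∈ Set.Ioo (-1 : ℝ) 1) (x y : ℝ)
    (hx : 0 < x - ρ * y) (hy : 0 < y - ρ * x) :
    biNormalTail ρ x y
        ≤ biNormalPdf ρ x y * (1 - ρ ^ 2) ^ 2 / ((x - ρ * y) * (y - ρ * x))
    ∧ biNormalPdf ρ x y * (1 - ρ ^ 2) ^ 2 / ((x - ρ * y) * (y - ρ * x)) *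
          (1 - (1 - ρ ^ 2) * (1 / (x - ρ * y) ^ 2
            - ρ / ((x - ρ * y) * (y - ρ * x)) + 1 / (y - ρ * x) ^ 2))
        ≤ biNormalTail ρ x y := by
  obtain ⟨h1, h2⟩ := hρ
  have hσ : 0 < 1 - ρ ^ 2 := by nlinarith
  have hσ' : (1 - ρ ^ 2) ≠ 0 := ne_of_gt hσ
  have hsqrt : 0 < Real.sqrt (1 - ρ ^ 2) := Real.sqrt_pos.mpr hσ
  have hC : 0 < biNormalPdf ρ x y :=
    mul_pos (inv_pos.mpr (mul_pos (mul_pos two_pos Real.pi_pos) hsqrt)) (Real.exp_pos _)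
  set a := x - ρ * y with hadef
  set b := y - ρ * x with hbdef
  have hfac : ∀ s t : ℝ, biNormalPdf ρ (x + s) (y + t)
      = biNormalPdf ρ x y * Real.exp (-((a * s + b * t) / (1 - ρ ^ 2))
          - (s ^ 2 - 2 * ρ * s * t + t ^ 2) / (2 * (1 - ρ ^ 2))) := by
    intro s t
    unfold biNormalPdf
    rw [mul_assoc ((2 * Real.pi * Real.sqrt (1 - ρ ^ 2))⁻¹), ← Real.exp_add]
    congr 1
    rw [hadef, hbdef]
    field_simp
    ring
  have htail : biNormalTail ρ x y = biNormalPdf ρ x y *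
      ∫ s in Set.Ioi 0, ∫ t in Set.Ioi 0,
        Real.exp (-((a * s + b * t) / (1 - ρ ^ 2))
          - (s ^ 2 - 2 * ρ * s * t + t ^ 2) / (2 * (1 - ρ ^ 2))) := by
    unfold biNormalTail
    rw [shift_Ioi (fun u => ∫ v in Set.Ioi y, biNormalPdf ρ u v) x,
      setIntegral_congr_fun measurableSet_Ioi
        (fun s _ => shift_Ioi (fun v => biNormalPdf ρ (x + s) v) y),
      setIntegral_congr_fun measurableSet_Ioi (fun s _ => setIntegral_congr_fun
        measurableSet_Ioi (fun t _ => hfac s t))]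
    simp_rw [MeasureTheory.integral_const_mul]
  obtain ⟨hlow, hup⟩ := Ibounds (a := a) (b := b) h1 h2 hx hy
  constructor
  · rw [htail, mul_div_assoc]
    exact mul_le_mul_of_nonneg_left hup hC.le
  · rw [htail, mul_div_assoc, mul_assoc]
    exact mul_le_mul_of_nonneg_left hlow hC.le
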